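/- The unique nonnegative equilibrium of the proportional block fast subsystem is locally asymptotically stable: the Jacobian of the vector field (p⁺, p⁻) ↦ (r·s·e⁺ − s·p⁺ − q·p⁺·p⁻, r·s·e⁻ − s·p⁻ − q·p⁺·p⁻) at the equilibrium has trace < 0 and determinant > 0 (hence both eigenvalues have negative real part). -/
import Mathlib

/-- The Jacobian of the proportional block vector field at the nonnegative equilibrium
has negative trace and positive determinant, hence the equilibrium is locally
asymptotically stable. -/
theorem proportional_block_equilibrium_stable
    (r s q ep em pp pm : ℝ)
    (hr : 0 ≤ r) (hs : 0 < s) (hq : 0 < q) (hep : 0 ≤ ep) (hem : 0 ≤ em)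
    (hpp : 0 ≤ pp) (hpm : 0 ≤ pm)
    (heq1 : r * s * ep = s * pp + q * pp * pm)
    (heq2 : r * s * em = s * pm + q * pp * pm) :
    ((-s - q * pm) + (-s - q * pp) < 0) ∧
    ((-s - q * pm) * (-s - q * pp) - (-q * pp) * (-q * pm) > 0) := by
  constructor <;> nlinarith [mul_nonneg hq.le hpp, mul_nonneg hq.le hpm, mul_pos hs hs]
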